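/- Let (H₀,H₁,𝒳,ℋ) be a smooth scattering system and β ∈ (0,1). Then H₀ is of high-energy order β if and only if H₁ is of high-energy order β. -/

import Mathlib

set_option linter.unusedSectionVars false
set_option linter.unusedVariables false
set_option maxHeartbeats 1000000

open MeasureTheory Filter Complex Set Topology
open scoped ENNReal NNReal ComplexInnerProductSpace

noncomputable section

variable (H : Type*) [NormedAddCommGroup H] [InnerProductSpace ℂ H] [CompleteSpace H]

/-- Truncation of a Borel function, used to define the unbounded functional calculus
from the bounded one. -/
def trunc (g : ℝ → ℂ) (n : ℕ) : ℝ → ℂ := Set.indicator {t | ‖g t‖ ≤ n} g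

/-- A (possibly unbounded) self-adjoint operator on a complex Hilbert space, packaged
together with its unitary one-parameter group `e^{itH}`, its bounded Borel functional
calculus, its spectral projections, the projection onto the absolutely continuous
subspace, the unbounded Borel functional calculus, the scalar spectral measures and
the resolvent.  The axioms recorded below tie all of these data together. -/
structure SAOp where
  /-- the operator, as a densely defined partial linear map -/
  T : H →ₗ.[ℂ] H
  dense_dom : Dense (T.domain : Set H)
  selfAdjoint : IsSelfAdjoint T
  /-- the unitary group `t ↦ e^{itH}` -/
  U : ℝ → H →L[ℂ] H
  U_zero : U 0 = 1
  U_add : ∀ s t, U (s + t) = (U s).comp (U t)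
  U_isometry : ∀ t x, ‖U t x‖ = ‖x‖
  U_cont : ∀ x, Continuous fun t => U t x
  /-- `H` generates the group: `d/dt e^{itH} x |_{t=0} = i H x` on the domain -/
  U_gen : ∀ x : T.domain, HasDerivAt (fun t => U t (x : H)) (Complex.I • T x) 0
  /-- and the domain is maximal with this property -/
  U_gen_max : ∀ x y : H, HasDerivAt (fun t => U t x) (Complex.I • y) 0 → x ∈ T.domain
  /-- the bounded Borel functional calculus -/
  bcal : (ℝ → ℂ) → H →L[ℂ] H
  bcal_one : bcal (fun _ => 1) = 1
  bcal_add : ∀ g h, bcal (g + h) = bcal g + bcal h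
  bcal_mul : ∀ g h, bcal (g * h) = (bcal g).comp (bcal h)
  bcal_conj : ∀ g x y, ⟪bcal g x, y⟫ = ⟪x, bcal (fun t => (starRingEnd ℂ) (g t)) y⟫
  bcal_norm : ∀ (g : ℝ → ℂ) (M : ℝ), (∀ t, ‖g t‖ ≤ M) → ∀ x, ‖bcal g x‖ ≤ M * ‖x‖
  bcal_exp : ∀ t : ℝ, bcal (fun s => Complex.exp (Complex.I * t * s)) = U t
  /-- dominated convergence, making `bcal` the Borel functional calculus -/
  bcal_conv : ∀ (g : ℕ → ℝ → ℂ) (g' : ℝ → ℂ) (M : ℝ), (∀ n t, ‖g n t‖ ≤ M) →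
    (∀ t, Tendsto (fun n => g n t) atTop (𝓝 (g' t))) →
    ∀ x, Tendsto (fun n => bcal (g n) x) atTop (𝓝 (bcal g' x))
  /-- the spectral projections `E(B)`, `B ⊆ ℝ` Borel -/
  E : Set ℝ → H →L[ℂ] H
  E_def : ∀ B, E B = bcal (Set.indicator B fun _ => 1)
  /-- the orthogonal projection onto the absolutely continuous subspace -/
  Pac : H →L[ℂ] H
  Pac_idem : Pac.comp Pac = Pac
  Pac_symm : ∀ x y, ⟪Pac x, y⟫ = ⟪x, Pac y⟫
  Pac_mem : ∀ x, Pac x = x ↔ ∀ B : Set ℝ, MeasurableSet B → volume B = 0 → E B x = 0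
  /-- the unbounded Borel functional calculus -/
  fcal : (ℝ → ℂ) → H →ₗ.[ℂ] H
  fcal_dom : ∀ g x, x ∈ (fcal g).domain ↔
    ∃ y, Tendsto (fun n => bcal (trunc g n) x) atTop (𝓝 y)
  fcal_spec : ∀ g (x : (fcal g).domain),
    Tendsto (fun n => bcal (trunc g n) (x : H)) atTop (𝓝 (fcal g x))
  /-- the scalar spectral measures `B ↦ ⟨x, E(B) x⟩` -/
  specMeasure : H → Measure ℝ
  specMeasure_def : ∀ x B, MeasurableSet B →
    specMeasure x B = ENNReal.ofReal (⟪x, E B x⟫).re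
  /-- the resolvent `(H-z)⁻¹`, defined (at least) off the real axis -/
  Res : ℂ → H →L[ℂ] H
  Res_mem : ∀ z : ℂ, z.im ≠ 0 → ∀ x, Res z x ∈ T.domain
  Res_spec : ∀ (z : ℂ) (hz : z.im ≠ 0) (x : H),
    T ⟨Res z x, Res_mem z hz x⟩ - z • Res z x = x

variable {H}

/-- `W` is the wave operator `W_±(H₁,H₀)` (for `l = atTop` resp. `atBot`). -/
def IsWaveOp (S1 S0 : SAOp H) (l : Filter ℝ) (W : H →L[ℂ] H) : Prop :=
  ∀ x, Tendsto (fun t => S1.U (-t) (S0.U t (S0.Pac x))) l (𝓝 (W x))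

/-- Completeness of a wave operator: its final space is the absolutely continuous
subspace of `H₁`. -/
def IsCompleteWaveOp (S1 : SAOp H) (W : H →L[ℂ] H) : Prop :=
  Set.range W = {y | S1.Pac y = y}

/-- Boundedness of the composition `B ∘ T` of a bounded operator with a partially
defined (possibly unbounded) operator. -/
def BddComp (B : H →L[ℂ] H) (T : H →ₗ.[ℂ] H) : Prop :=
  ∃ C : ℝ, ∀ x : T.domain, ‖B (T x)‖ ≤ C * ‖(x : H)‖

/-- A real function viewed as complex valued. -/
def cf (f : ℝ → ℝ) : ℝ → ℂ := fun t => (f t : ℂ)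

/-- `(W - P₁^{ac} P₀^{ac}) f(H₀)` is bounded. -/
def FBoundedWith (S1 S0 : SAOp H) (f : ℝ → ℝ) (W : H →L[ℂ] H) : Prop :=
  BddComp (W - S1.Pac.comp S0.Pac) (S0.fcal (cf f))

/-- The pair `(H₁,H₀)` is `f`-bounded: both wave operators `W_±(H₁,H₀)` exist and
`(W_±(H₁,H₀) - P₁^{ac} P₀^{ac}) f(H₀)` is bounded. -/
def FBoundedPair (S1 S0 : SAOp H) (f : ℝ → ℝ) : Prop :=
  ∀ l ∈ ({atTop, atBot} : Set (Filter ℝ)),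
    ∃ W : H →L[ℂ] H, IsWaveOp S1 S0 l W ∧ FBoundedWith S1 S0 f W

/-- Mutual `f`-boundedness `H₁ ∼_f H₀`. -/
def MutuallyFBounded (S1 S0 : SAOp H) (f : ℝ → ℝ) : Prop :=
  FBoundedPair S1 S0 f ∧ FBoundedPair S0 S1 f

/-- The spectrum of (the operator described by) `S`, via its spectral projections. -/
def SAOp.spectrum (S : SAOp H) : Set ℝ :=
  {t | ∀ ε > 0, S.E (Set.Ioo (t - ε) (t + ε)) ≠ 0}

/-- The absolutely continuous spectrum. -/
def SAOp.acSpectrum (S : SAOp H) : Set ℝ :=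
  {t | ∀ ε > 0, (S.E (Set.Ioo (t - ε) (t + ε))).comp S.Pac ≠ 0}

/-- The sum `H + V` of a partially defined operator and a bounded operator. -/
def LinearPMap.addL (T : H →ₗ.[ℂ] H) (V : H →L[ℂ] H) : H →ₗ.[ℂ] H :=
  ⟨T.domain, T.toFun + (V : H →ₗ[ℂ] H).comp T.domain.subtype⟩


/-- The function `f_β(λ) = (1+λ²)^{β/2}`. -/
def fbeta (β : ℝ) : ℝ → ℝ := fun l => (1 + l ^ 2) ^ (β / 2)

/-- `A` is a (positive) trace class operator: `Σ ⟨e_i, A e_i⟩ < ∞` for a Hilbert basis. -/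
def TraceClassOp {K : Type*} [NormedAddCommGroup K] [InnerProductSpace ℂ K]
    [CompleteSpace K] (A : K →L[ℂ] K) : Prop :=
  ∃ (w : Type) (b : HilbertBasis w ℂ K), Summable fun i => (⟪b i, A (b i)⟫).re

variable (H : Type*) [NormedAddCommGroup H] [InnerProductSpace ℂ H] [CompleteSpace H]
variable (X : Type*) [NormedAddCommGroup X] [NormedSpace ℂ X]

/-- A Gelfand triple `𝒳 ⊂ ℋ ⊂ 𝒳*`: a Banach space `𝒳` continuously and densely
embedded into the Hilbert space `ℋ`. -/
structure GelfandTriple where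
  ι : X →L[ℂ] H
  denseRange : DenseRange ι
  inj : Function.Injective ι

variable {H X}

/-- The canonical (linear!) embedding of `ℋ` into the conjugate dual `𝒳*` of `𝒳`,
`h ↦ (x ↦ ⟪ι x, h⟫)`. -/
def GelfandTriple.toConjDual (G : GelfandTriple H X) (h : H) : X →L⋆[ℂ] ℂ :=
  ((innerSL ℂ).flip h).comp G.ι

lemma GelfandTriple.toConjDual_apply (G : GelfandTriple H X) (h : H) (x : X) :
    G.toConjDual h x = ⟪G.ι x, h⟫ := rfl

lemma GelfandTriple.norm_toConjDual_le (G : GelfandTriple H X) (h : H) :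
    ‖G.toConjDual h‖ ≤ ‖G.ι‖ * ‖h‖ := by
  refine ContinuousLinearMap.opNorm_le_bound _ (by positivity) fun x => ?_
  calc ‖G.toConjDual h x‖ ≤ ‖G.ι x‖ * ‖h‖ := norm_inner_le_norm _ _
    _ ≤ ‖G.ι‖ * ‖x‖ * ‖h‖ := by gcongr; exact G.ι.le_opNorm x
    _ = ‖G.ι‖ * ‖h‖ * ‖x‖ := by ring

/-- The operator in `B(𝒳,𝒳*)` induced by a bounded operator on `ℋ`. -/
def GelfandTriple.inducedOp (G : GelfandTriple H X) (A : H →L[ℂ] H) :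
    X →L[ℂ] (X →L⋆[ℂ] ℂ) :=
  LinearMap.mkContinuous
    { toFun := fun y => G.toConjDual (A (G.ι y))
      map_add' := fun y z => by
        ext x
        simp [GelfandTriple.toConjDual_apply, inner_add_right]
      map_smul' := fun c y => by
        ext x
        simp [GelfandTriple.toConjDual_apply, inner_smul_right] }
    (‖G.ι‖ * ‖A‖ * ‖G.ι‖)
    (fun y => by
      calc ‖G.toConjDual (A (G.ι y))‖ ≤ ‖G.ι‖ * ‖A (G.ι y)‖ := G.norm_toConjDual_le _
        _ ≤ ‖G.ι‖ * (‖A‖ * (‖G.ι‖ * ‖y‖)) := by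
            gcongr
            exact (A.le_opNorm _).trans (by gcongr; exact G.ι.le_opNorm y)
        _ = ‖G.ι‖ * ‖A‖ * ‖G.ι‖ * ‖y‖ := by ring)

/-- Local Hölder continuity on a set. -/
def LocallyHolderOn {α E : Type*} [PseudoMetricSpace α] [PseudoMetricSpace E] (F : α → E) (s : Set α) : Prop :=
  ∀ z ∈ s, ∃ t ∈ 𝓝[s] z, ∃ C r : ℝ≥0, 0 < r ∧ r ≤ 1 ∧ HolderOnWith C r F t


variable {H : Type*} [NormedAddCommGroup H] [InnerProductSpace ℂ H] [CompleteSpace H]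
variable {X : Type*} [NormedAddCommGroup X] [NormedSpace ℂ X]

/-- `𝒳`-smoothness data for a self-adjoint operator: an open set `U ⊆ ℝ` of full
Lebesgue measure together with the boundary values `R(λ ± i0)` of the resolvent in
`B(𝒳,𝒳*)`, which extend the resolvent locally Hölder continuously to
`ℍ_± ∪ U`. -/
structure SmoothData (G : GelfandTriple H X) (S : SAOp H) where
  U : Set ℝ
  openU : IsOpen U
  fullU : volume Uᶜ = 0
  Rp : ℝ → X →L[ℂ] (X →L⋆[ℂ] ℂ)
  Rm : ℝ → X →L[ℂ] (X →L⋆[ℂ] ℂ)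
  limP : ∀ l ∈ U, Tendsto (fun ε : ℝ => G.inducedOp (S.Res (l + ε * Complex.I)))
    (𝓝[>] 0) (𝓝 (Rp l))
  limM : ∀ l ∈ U, Tendsto (fun ε : ℝ => G.inducedOp (S.Res (l - ε * Complex.I)))
    (𝓝[>] 0) (𝓝 (Rm l))
  holderP : LocallyHolderOn
    (fun z => if 0 < z.im then G.inducedOp (S.Res z) else Rp z.re)
    ({z : ℂ | 0 < z.im} ∪ (Complex.ofReal '' U))
  holderM : LocallyHolderOn
    (fun z => if z.im < 0 then G.inducedOp (S.Res z) else Rm z.re)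
    ({z : ℂ | z.im < 0} ∪ (Complex.ofReal '' U))

/-- The operator `A(λ) = (2πi)⁻¹ (R(λ+i0) - R(λ-i0)) ∈ B(𝒳,𝒳*)`. -/
def SmoothData.A {G : GelfandTriple H X} {S : SAOp H} (D : SmoothData G S) (l : ℝ) :
    X →L[ℂ] (X →L⋆[ℂ] ℂ) :=
  ((2 * Real.pi * Complex.I)⁻¹) • (D.Rp l - D.Rm l)

/-- An `𝒳`-smooth operator is of high-energy order `β` if
`‖R(λ±i0)‖_{𝒳,𝒳*} ≤ b |λ|^{-β}` for all `λ ∈ U` with `|λ| ≥ λ̂`. -/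
def HighEnergyOrder {G : GelfandTriple H X} {S : SAOp H} (D : SmoothData G S)
    (β : ℝ) : Prop :=
  ∃ lam b : ℝ, 0 < lam ∧ 0 < b ∧ ∀ l ∈ D.U, lam ≤ |l| →
    ‖D.Rp l‖ ≤ b * |l| ^ (-β) ∧ ‖D.Rm l‖ ≤ b * |l| ^ (-β)

/-- `V ∈ Γ₂(𝒳*,𝒳)`: `V` factors through a Hilbert space, `V = V₁* V₀` with
`V₀, V₁ ∈ B(𝒳*,𝒦)`. -/
def IsGamma2 (G : GelfandTriple H X) (Vd : (X →L⋆[ℂ] ℂ) →L[ℂ] X) : Prop :=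
  ∃ (K : Type) (_ : NormedAddCommGroup K) (_ : InnerProductSpace ℂ K)
    (_ : CompleteSpace K) (V0 V1 : (X →L⋆[ℂ] ℂ) →L[ℂ] K),
    ∀ φ ψ : X →L⋆[ℂ] ℂ, ψ (Vd φ) = ⟪V0 φ, V1 ψ⟫

/-- A smooth scattering system `(H₀, H₁, 𝒳, ℋ)`: two `𝒳`-smooth self-adjoint
operators on a common domain whose difference `V = H₁ - H₀` lies in `Γ₂(𝒳*,𝒳)`. -/
structure SmoothScatteringSystem (G : GelfandTriple H X) where
  S0 : SAOp H
  S1 : SAOp H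
  Vop : H →L[ℂ] H
  hsum : S1.T = S0.T.addL Vop
  D0 : SmoothData G S0
  D1 : SmoothData G S1
  sameU : D1.U = D0.U
  Vd : (X →L⋆[ℂ] ℂ) →L[ℂ] X
  hVd : ∀ h : H, G.ι (Vd (G.toConjDual h)) = Vop h
  gamma2 : IsGamma2 G Vd

/-- A smooth scattering system has high-energy order `β` if both its operators do. -/
def SmoothScatteringSystem.HighEnergy {G : GelfandTriple H X}
    (SS : SmoothScatteringSystem G) (β : ℝ) : Prop :=
  HighEnergyOrder SS.D0 β ∧ HighEnergyOrder SS.D1 β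

/-- The extension of the resolvent to the closed upper half plane, using the
boundary values `R(λ+i0)` on the reals. -/
def SmoothData.extP {G : GelfandTriple H X} {S : SAOp H} (D : SmoothData G S) :
    ℂ → (X →L[ℂ] (X →L⋆[ℂ] ℂ)) :=
  fun z => if 0 < z.im then G.inducedOp (S.Res z) else D.Rp z.re

/-- The extension of the resolvent to the closed lower half plane. -/
def SmoothData.extM {G : GelfandTriple H X} {S : SAOp H} (D : SmoothData G S) :
    ℂ → (X →L[ℂ] (X →L⋆[ℂ] ℂ)) :=
  fun z => if z.im < 0 then G.inducedOp (S.Res z) else D.Rm z.re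

/-- A finite-rank operator from `𝒳` to `𝒳*`. -/
def FiniteRankXXd (F : X →L[ℂ] (X →L⋆[ℂ] ℂ)) : Prop :=
  ∃ (n : ℕ) (c : Fin n → (X →L[ℂ] ℂ)) (g : Fin n → (X →L⋆[ℂ] ℂ)),
    ∀ y, F y = ∑ i, (c i y) • g i

/-- Membership in `FA(𝒳,𝒳*)`, the norm closure of the finite-rank operators. -/
def InFA (F : X →L[ℂ] (X →L⋆[ℂ] ℂ)) : Prop :=
  ∀ ε > 0, ∃ F', FiniteRankXXd F' ∧ ‖F - F'‖ ≤ ε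

variable {H : Type*} [NormedAddCommGroup H] [InnerProductSpace ℂ H] [CompleteSpace H]
variable {X : Type*} [NormedAddCommGroup X] [NormedSpace ℂ X]

instance : ContinuousSub (X →L[ℂ] (X →L⋆[ℂ] ℂ)) := IsTopologicalAddGroup.to_continuousSub (G := X →L[ℂ] (X →L⋆[ℂ] ℂ))

lemma GelfandTriple.inducedOp_apply (G : GelfandTriple H X) (A : H →L[ℂ] H) (y : X) :
    G.inducedOp A y = G.toConjDual (A (G.ι y)) := rfl

lemma aux_apply_congr {T1 T2 : H →ₗ.[ℂ] H} (h : T1 = T2) (x : H) (h1 : x ∈ T1.domain)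
    (h2 : x ∈ T2.domain) : T1 ⟨x, h1⟩ = T2 ⟨x, h2⟩ := by subst h; rfl

lemma aux_addL_apply (T : H →ₗ.[ℂ] H) (V : H →L[ℂ] H) (x : H) (hx : x ∈ (T.addL V).domain) :
    (T.addL V) ⟨x, hx⟩ = T ⟨x, hx⟩ + V x := rfl

/-- Uniqueness of solutions of the resolvent equation for a self-adjoint operator. -/
lemma aux_res_unique (S : SAOp H) {z : ℂ} (hz : z.im ≠ 0) {x : H} (hx : x ∈ S.T.domain)
    {w : H} (hw : S.T ⟨x, hx⟩ - z • x = w) : x = S.Res z w := by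
  have hsa : S.T.adjoint = S.T := S.selfAdjoint
  have hsym : S.T.IsFormalAdjoint S.T := by
    have h := LinearPMap.adjoint_isFormalAdjoint (T := S.T) (hT := S.dense_dom)
    rwa [hsa] at h
  set r := S.Res z w with hrdef
  have hrmem : r ∈ S.T.domain := S.Res_mem z hz w
  have hrw : S.T ⟨r, hrmem⟩ - z • r = w := S.Res_spec z hz w
  have humem : x - r ∈ S.T.domain := sub_mem hx hrmem
  have hTu : S.T ⟨x - r, humem⟩ = z • (x - r) := by
    have he : (⟨x - r, humem⟩ : S.T.domain) = ⟨x, hx⟩ - ⟨r, hrmem⟩ := rfl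
    rw [he, LinearPMap.map_sub]
    have h1 : S.T ⟨x, hx⟩ = w + z • x := by rw [← hw]; abel
    have h2 : S.T ⟨r, hrmem⟩ = w + z • r := by rw [← hrw]; abel
    rw [h1, h2, smul_sub]; abel
  have hkey := hsym ⟨x - r, humem⟩ ⟨x - r, humem⟩
  rw [hTu] at hkey
  have hkey2 : (starRingEnd ℂ) z * ⟪x - r, x - r⟫ = z * ⟪x - r, x - r⟫ := by
    simpa [inner_smul_left, inner_smul_right] using hkey
  have hz2 : (starRingEnd ℂ) z ≠ z := fun hc => hz (Complex.conj_eq_iff_im.mp hc)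
  have h0 : ⟪x - r, x - r⟫ = (0 : ℂ) := by
    by_contra hne
    exact hz2 (mul_right_cancel₀ hne hkey2)
  have hxr : x - r = 0 := by rwa [inner_self_eq_zero] at h0
  rw [← sub_eq_zero]; exact hxr

/-- The second resolvent identity. -/
lemma aux_res_id (S0 S1 : SAOp H) (V : H →L[ℂ] H) (hsum : S1.T = S0.T.addL V)
    {z : ℂ} (hz : z.im ≠ 0) (w : H) :
    S1.Res z w = S0.Res z w - S0.Res z (V (S1.Res z w)) := by
  have hdom : S1.T.domain = S0.T.domain := by rw [hsum]; rfl
  set y := S1.Res z w with hy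
  have hy1 : y ∈ S1.T.domain := S1.Res_mem z hz w
  have hy0 : y ∈ S0.T.domain := hdom ▸ hy1
  have happ : S1.T ⟨y, hy1⟩ = S0.T ⟨y, hy0⟩ + V y := by
    have h2 : y ∈ (S0.T.addL V).domain := hy0
    rw [aux_apply_congr hsum y hy1 h2, aux_addL_apply]
  have hs : S0.T ⟨y, hy0⟩ - z • y = w - V y := by
    have h1 : S1.T ⟨y, hy1⟩ - z • y = w := S1.Res_spec z hz w
    rw [happ] at h1
    rw [eq_sub_iff_add_eq, ← h1]; abel
  have h := aux_res_unique S0 hz hy0 hs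
  rw [map_sub] at h
  exact h

lemma aux_hsum_symm (S0 S1 : SAOp H) (V : H →L[ℂ] H) (hsum : S1.T = S0.T.addL V) :
    S0.T = S1.T.addL (-V) := by
  have hdom : S1.T.domain = S0.T.domain := by rw [hsum]; rfl
  apply LinearPMap.ext
  · exact hdom.symm
  · intro z hz0 hz1
    let x : S0.T.domain := ⟨z, hz0⟩
    let y : (S1.T.addL (-V)).domain := ⟨z, hz1⟩
    have hxy : (x : H) = y := rfl
    show S0.T x = (S1.T.addL (-V)) y
    have hy1 : (y : H) ∈ S1.T.domain := y.2
    have hy0 : (y : H) ∈ S0.T.domain := hdom ▸ hy1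
    have happ : S1.T ⟨(y : H), hy1⟩ = S0.T ⟨(y : H), hy0⟩ + V y := by
      have h2 : (y : H) ∈ (S0.T.addL V).domain := hy0
      rw [aux_apply_congr hsum (y : H) hy1 h2, aux_addL_apply]
    have hgoal : (S1.T.addL (-V)) y = S1.T ⟨(y : H), hy1⟩ + (-V) (y : H) := rfl
    have hx : S0.T x = S0.T ⟨(y : H), hy0⟩ := by
      congr 1
    rw [hgoal, happ, hx]
    simp

/-- The second resolvent identity, in `B(𝒳,𝒳*)`. -/
lemma aux_induced_id (G : GelfandTriple H X) (S0 S1 : SAOp H) (V : H →L[ℂ] H)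
    (Vd : (X →L⋆[ℂ] ℂ) →L[ℂ] X) (hVd : ∀ h : H, G.ι (Vd (G.toConjDual h)) = V h)
    (hsum : S1.T = S0.T.addL V) {z : ℂ} (hz : z.im ≠ 0) :
    G.inducedOp (S1.Res z) = G.inducedOp (S0.Res z) -
      (G.inducedOp (S0.Res z)).comp (Vd.comp (G.inducedOp (S1.Res z))) := by
  apply ContinuousLinearMap.ext; intro y
  apply ContinuousLinearMap.ext; intro x
  have hres := aux_res_id S0 S1 V hsum hz (G.ι y)
  rw [ContinuousLinearMap.sub_apply, ContinuousLinearMap.comp_apply,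
    ContinuousLinearMap.comp_apply, G.inducedOp_apply, G.inducedOp_apply, G.inducedOp_apply,
    hVd, ContinuousLinearMap.sub_apply, G.toConjDual_apply, G.toConjDual_apply,
    G.toConjDual_apply]
  conv_lhs => rw [hres]
  rw [inner_sub_right]

lemma aux_tendsto_comp {l : Filter ℝ} {f g : ℝ → (X →L[ℂ] (X →L⋆[ℂ] ℂ))}
    {A B : X →L[ℂ] (X →L⋆[ℂ] ℂ)} (W : (X →L⋆[ℂ] ℂ) →L[ℂ] X)
    (hf : Tendsto f l (𝓝 A)) (hg : Tendsto g l (𝓝 B)) :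
    Tendsto (fun ε => (f ε).comp (W.comp (g ε))) l (𝓝 (A.comp (W.comp B))) := by
  have h1 : Tendsto (fun ε => W.comp (g ε)) l (𝓝 (W.comp B)) :=
    ((ContinuousLinearMap.compL ℂ X (X →L⋆[ℂ] ℂ) X W).continuous.tendsto B).comp hg
  have h2 := (isBoundedBilinearMap_comp
    (𝕜 := ℂ) (E := X) (F := X) (G := X →L⋆[ℂ] ℂ)).continuous
  exact (h2.tendsto (A, W.comp B)).comp (hf.prodMk_nhds h1)

lemma aux_boundary_P (G : GelfandTriple H X) (S0 S1 : SAOp H)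
    (D0 : SmoothData G S0) (D1 : SmoothData G S1) (Vd : (X →L⋆[ℂ] ℂ) →L[ℂ] X)
    (hid : ∀ z : ℂ, z.im ≠ 0 → G.inducedOp (S1.Res z) = G.inducedOp (S0.Res z) -
      (G.inducedOp (S0.Res z)).comp (Vd.comp (G.inducedOp (S1.Res z))))
    (hU : D1.U ⊆ D0.U) :
    ∀ l ∈ D1.U, D1.Rp l = D0.Rp l - (D0.Rp l).comp (Vd.comp (D1.Rp l)) := by
  intro l hl
  have h1 := D1.limP l hl
  have h0 := D0.limP l (hU hl)
  have h2 : Tendsto (fun ε : ℝ => G.inducedOp (S1.Res ((l : ℂ) + ε * Complex.I)))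
      (𝓝[>] 0) (𝓝 (D0.Rp l - (D0.Rp l).comp (Vd.comp (D1.Rp l)))) := by
    refine Tendsto.congr' ?_ (h0.sub (aux_tendsto_comp Vd h0 h1))
    filter_upwards [self_mem_nhdsWithin] with ε hε
    have him : ((l : ℂ) + ε * Complex.I).im ≠ 0 := by
      simpa using ne_of_gt (α := ℝ) hε
    exact (hid _ him).symm
  exact tendsto_nhds_unique h1 h2

lemma aux_boundary_M (G : GelfandTriple H X) (S0 S1 : SAOp H)
    (D0 : SmoothData G S0) (D1 : SmoothData G S1) (Vd : (X →L⋆[ℂ] ℂ) →L[ℂ] X)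
    (hid : ∀ z : ℂ, z.im ≠ 0 → G.inducedOp (S1.Res z) = G.inducedOp (S0.Res z) -
      (G.inducedOp (S0.Res z)).comp (Vd.comp (G.inducedOp (S1.Res z))))
    (hU : D1.U ⊆ D0.U) :
    ∀ l ∈ D1.U, D1.Rm l = D0.Rm l - (D0.Rm l).comp (Vd.comp (D1.Rm l)) := by
  intro l hl
  have h1 := D1.limM l hl
  have h0 := D0.limM l (hU hl)
  have h2 : Tendsto (fun ε : ℝ => G.inducedOp (S1.Res ((l : ℂ) - ε * Complex.I)))
      (𝓝[>] 0) (𝓝 (D0.Rm l - (D0.Rm l).comp (Vd.comp (D1.Rm l)))) := by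
    refine Tendsto.congr' ?_ (h0.sub (aux_tendsto_comp Vd h0 h1))
    filter_upwards [self_mem_nhdsWithin] with ε hε
    have him : ((l : ℂ) - ε * Complex.I).im ≠ 0 := by
      simpa using ne_of_gt (α := ℝ) hε
    exact (hid _ him).symm
  exact tendsto_nhds_unique h1 h2

lemma aux_transfer {G : GelfandTriple H X} {S0 S1 : SAOp H}
    {D0 : SmoothData G S0} {D1 : SmoothData G S1} (W : (X →L⋆[ℂ] ℂ) →L[ℂ] X)
    (hU : D1.U ⊆ D0.U)
    (hP : ∀ l ∈ D1.U, D1.Rp l = D0.Rp l - (D0.Rp l).comp (W.comp (D1.Rp l)))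
    (hM : ∀ l ∈ D1.U, D1.Rm l = D0.Rm l - (D0.Rm l).comp (W.comp (D1.Rm l)))
    {β : ℝ} (hβ : 0 < β) (h0 : HighEnergyOrder D0 β) : HighEnergyOrder D1 β := by
  obtain ⟨lam, b, hlam, hb, hbd⟩ := h0
  set c := ‖W‖ with hc
  have hc0 : (0 : ℝ) ≤ c := norm_nonneg W
  refine ⟨max lam (max 1 ((2 * b * (c + 1)) ^ (1 / β))), 2 * b,
    lt_of_lt_of_le hlam (le_max_left _ _), by positivity, ?_⟩
  intro l hl hll
  have habs1 : (1 : ℝ) ≤ |l| := le_trans (le_trans (le_max_left _ _) (le_max_right _ _)) hll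
  have habs0 : (0 : ℝ) < |l| := lt_of_lt_of_le one_pos habs1
  have hbd' := hbd l (hU hl) (le_trans (le_max_left _ _) hll)
  have hx : (2 * b * (c + 1)) ^ (1 / β) ≤ |l| :=
    le_trans (le_trans (le_max_right _ _) (le_max_right _ _)) hll
  have hpow : 2 * b * (c + 1) ≤ |l| ^ β := by
    have h1 : ((2 * b * (c + 1)) ^ (1 / β)) ^ β ≤ |l| ^ β :=
      Real.rpow_le_rpow (Real.rpow_nonneg (by positivity) _) hx (le_of_lt hβ)
    rwa [← Real.rpow_mul (by positivity), one_div, inv_mul_cancel₀ (ne_of_gt hβ),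
      Real.rpow_one] at h1
  have hposp : (0 : ℝ) < |l| ^ β := Real.rpow_pos_of_pos habs0 β
  have hsmall : b * |l| ^ (-β) * c ≤ 1 / 2 := by
    rw [Real.rpow_neg (le_of_lt habs0)]
    have hnum : b * c ≤ 1 / 2 * |l| ^ β := by nlinarith
    calc b * (|l| ^ β)⁻¹ * c = (b * c) / (|l| ^ β) := by
          rw [div_eq_mul_inv]; ring
      _ ≤ (1 / 2 * |l| ^ β) / (|l| ^ β) := by gcongr
      _ = 1 / 2 := by rw [mul_div_assoc, div_self (ne_of_gt hposp), mul_one]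
  have hra : (0 : ℝ) < |l| ^ (-β) := Real.rpow_pos_of_pos habs0 _
  constructor
  · have hidP := hP l hl
    have h1 : ‖D1.Rp l‖ ≤ ‖D0.Rp l‖ + ‖D0.Rp l‖ * (c * ‖D1.Rp l‖) := by
      conv_lhs => rw [hidP]
      refine le_trans (norm_sub_le (D0.Rp l) ((D0.Rp l).comp (W.comp (D1.Rp l)))) ?_
      have h2 : ‖(D0.Rp l).comp (W.comp (D1.Rp l))‖ ≤ ‖D0.Rp l‖ * (c * ‖D1.Rp l‖) :=
        le_trans ((D0.Rp l).opNorm_comp_le _)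
          (mul_le_mul_of_nonneg_left (W.opNorm_comp_le _) (norm_nonneg _))
      exact add_le_add_right h2 _
    nlinarith [norm_nonneg (D1.Rp l), norm_nonneg (D0.Rp l), hbd'.1,
      mul_le_mul_of_nonneg_right hbd'.1 (mul_nonneg hc0 (norm_nonneg (D1.Rp l))),
      mul_le_mul_of_nonneg_right hsmall (norm_nonneg (D1.Rp l))]
  · have hidM := hM l hl
    have h1 : ‖D1.Rm l‖ ≤ ‖D0.Rm l‖ + ‖D0.Rm l‖ * (c * ‖D1.Rm l‖) := by
      conv_lhs => rw [hidM]
      refine le_trans (norm_sub_le (D0.Rm l) ((D0.Rm l).comp (W.comp (D1.Rm l)))) ?_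
      have h2 : ‖(D0.Rm l).comp (W.comp (D1.Rm l))‖ ≤ ‖D0.Rm l‖ * (c * ‖D1.Rm l‖) :=
        le_trans ((D0.Rm l).opNorm_comp_le _)
          (mul_le_mul_of_nonneg_left (W.opNorm_comp_le _) (norm_nonneg _))
      exact add_le_add_right h2 _
    nlinarith [norm_nonneg (D1.Rm l), norm_nonneg (D0.Rm l), hbd'.2,
      mul_le_mul_of_nonneg_right hbd'.2 (mul_nonneg hc0 (norm_nonneg (D1.Rm l))),
      mul_le_mul_of_nonneg_right hsmall (norm_nonneg (D1.Rm l))]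

/-- **Statement 9** (Proposition: the high-energy order transfers between the two
operators of a smooth scattering system).  For a smooth scattering system
`(H₀,H₁,𝒳,ℋ)` and `β ∈ (0,1)`, `H₀` is of high-energy order `β` iff `H₁` is. -/
theorem stmt9 [TopologicalSpace.SeparableSpace H]
    (G : GelfandTriple H X) (SS : SmoothScatteringSystem G)
    (β : ℝ) (hβ : β ∈ Set.Ioo (0:ℝ) 1) :
    HighEnergyOrder SS.D0 β ↔ HighEnergyOrder SS.D1 β := by
  obtain ⟨hβ0, hβ1⟩ := hβ
  have hdomU : SS.D1.U ⊆ SS.D0.U := by rw [SS.sameU]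
  have hdomU' : SS.D0.U ⊆ SS.D1.U := by rw [SS.sameU]
  have hid1 : ∀ z : ℂ, z.im ≠ 0 → G.inducedOp (SS.S1.Res z) = G.inducedOp (SS.S0.Res z) -
      (G.inducedOp (SS.S0.Res z)).comp (SS.Vd.comp (G.inducedOp (SS.S1.Res z))) :=
    fun z hz => aux_induced_id G SS.S0 SS.S1 SS.Vop SS.Vd SS.hVd SS.hsum hz
  have hsum' := aux_hsum_symm SS.S0 SS.S1 SS.Vop SS.hsum
  have hVd' : ∀ h : H, G.ι ((-SS.Vd) (G.toConjDual h)) = (-SS.Vop) h := by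
    intro h
    simp only [ContinuousLinearMap.neg_apply, map_neg]
    rw [SS.hVd]
  have hid0 : ∀ z : ℂ, z.im ≠ 0 → G.inducedOp (SS.S0.Res z) = G.inducedOp (SS.S1.Res z) -
      (G.inducedOp (SS.S1.Res z)).comp ((-SS.Vd).comp (G.inducedOp (SS.S0.Res z))) :=
    fun z hz => aux_induced_id G SS.S1 SS.S0 (-SS.Vop) (-SS.Vd) hVd' hsum' hz
  constructor
  · intro h0
    exact aux_transfer SS.Vd hdomU
      (aux_boundary_P G SS.S0 SS.S1 SS.D0 SS.D1 SS.Vd hid1 hdomU)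
      (aux_boundary_M G SS.S0 SS.S1 SS.D0 SS.D1 SS.Vd hid1 hdomU) hβ0 h0
  · intro h1
    exact aux_transfer (-SS.Vd) hdomU'
      (aux_boundary_P G SS.S1 SS.S0 SS.D1 SS.D0 (-SS.Vd) hid0 hdomU')
      (aux_boundary_M G SS.S1 SS.S0 SS.D1 SS.D0 (-SS.Vd) hid0 hdomU') hβ0 h1

end
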